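/- Let W ∈ ℤ^{m×n}, g: ℝ^m → ℝ convex with L-Lipschitz continuous gradients (‖∇g(u) − ∇g(v)‖_∞ ≤ L‖u−v‖₁), and let x* ∈ [0,1]^n minimize g(Wx) over [0,1]^n with at most m fractional entries. Then g(W⌈x*⌋) − g(Wx*) ≤ (L/4)·m⁴·‖W‖_∞², where ⌈x*⌋ denotes coordinate-wise rounding of x* to the nearest integer. -/

import Mathlib

/-- Rounding gap bound: g(W⌈x*⌋) − g(Wx*) ≤ (L/4)m⁴‖W‖_∞². -/
theorem stmt14 (m n : ℕ) (W : Matrix (Fin m) (Fin n) ℤ) (g : (Fin m → ℝ) → ℝ)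
    (L : ℝ) (hL : 0 < L)
    (hconv : ConvexOn ℝ Set.univ g) (hdiff : Differentiable ℝ g)
    (hLip : ∀ u v : Fin m → ℝ, ∀ j : Fin m,
      |fderiv ℝ g u (Pi.single j 1) - fderiv ℝ g v (Pi.single j 1)| ≤ L * ∑ i, |u i - v i|)
    (xs : Fin n → ℝ) (hxs : ∀ i, xs i ∈ Set.Icc (0:ℝ) 1)
    (hmin : ∀ y : Fin n → ℝ, (∀ i, y i ∈ Set.Icc (0:ℝ) 1) →
      g ((W.map (fun a => (a:ℝ))).mulVec xs) ≤ g ((W.map (fun a => (a:ℝ))).mulVec y))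
    (hfrac : Set.ncard {i | xs i ≠ 0 ∧ xs i ≠ 1} ≤ m) :
    g ((W.map (fun a => (a:ℝ))).mulVec (fun i => (round (xs i) : ℝ))) -
      g ((W.map (fun a => (a:ℝ))).mulVec xs) ≤
    L / 4 * (m:ℝ) ^ 4 *
      ((Finset.univ.sup (fun p : Fin m × Fin n => (W p.1 p.2).natAbs) : ℕ) : ℝ) ^ 2 := by
  classical
  set Wr : Matrix (Fin m) (Fin n) ℝ := W.map (fun a => (a:ℝ)) with hWrdef
  set r : Fin n → ℝ := fun i => (round (xs i) : ℝ) with hrdef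
  set d : Fin n → ℝ := r - xs with hddef
  set v : Fin m → ℝ := Wr.mulVec xs with hvdef
  set w : Fin m → ℝ := Wr.mulVec r with hwdef
  set u : Fin m → ℝ := Wr.mulVec d with hudef
  set B : ℝ := ((Finset.univ.sup (fun p : Fin m × Fin n => (W p.1 p.2).natAbs) : ℕ) : ℝ)
    with hBdef
  have hwv : w - v = u := by
    rw [hudef, hddef, Matrix.mulVec_sub]
  -- basic facts about d
  have hd0 : ∀ i, xs i = 0 ∨ xs i = 1 → d i = 0 := by
    intro i hi
    simp only [hddef, Pi.sub_apply, hrdef]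
    rcases hi with h | h <;> rw [h] <;> norm_num
  have hdle : ∀ i, |d i| ≤ 1 / 2 := by
    intro i
    have := abs_sub_round (xs i)
    simp only [hddef, Pi.sub_apply, hrdef]
    rwa [abs_sub_comm]
  -- the linear expansion of a continuous linear functional
  have hexp : ∀ T : (Fin m → ℝ) →L[ℝ] ℝ, ∀ x : Fin m → ℝ,
      T x = ∑ j, x j * T (Pi.single j 1) := by
    intro T x
    have hx : x = ∑ j, x j • (Pi.single j (1:ℝ) : Fin m → ℝ) := by
      funext k
      simp [Finset.sum_apply, Pi.single_apply]
    conv_lhs => rw [hx]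
    rw [map_sum]
    refine Finset.sum_congr rfl fun j _ => ?_
    rw [map_smul]
    simp
  -- bound on entries of Wr
  have hWB : ∀ j i, |Wr j i| ≤ B := by
    intro j i
    have h1 : Wr j i = ((W j i : ℤ) : ℝ) := rfl
    have h2 : ((W j i).natAbs : ℕ) ≤ Finset.univ.sup
        (fun p : Fin m × Fin n => (W p.1 p.2).natAbs) :=
      Finset.le_sup (f := fun p : Fin m × Fin n => (W p.1 p.2).natAbs)
        (Finset.mem_univ (j, i))
    rw [h1, hBdef, ← Int.cast_abs, Int.abs_eq_natAbs]
    exact_mod_cast h2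
  have hB0 : 0 ≤ B := by positivity
  -- sum of |d i| bound
  have hdsum : ∑ i, |d i| ≤ (m : ℝ) / 2 := by
    set F : Finset (Fin n) := Finset.univ.filter (fun i => xs i ≠ 0 ∧ xs i ≠ 1) with hF
    have hcard : (F.card : ℝ) ≤ (m : ℝ) := by
      have : {i | xs i ≠ 0 ∧ xs i ≠ 1}.ncard = F.card := by
        have hset : {i | xs i ≠ 0 ∧ xs i ≠ 1} = ↑F := by ext i; simp [hF]
        rw [hset, Set.ncard_coe_finset]
      exact_mod_cast this ▸ hfrac
    have hsum_eq : ∑ i, |d i| = ∑ i ∈ F, |d i| := by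
      rw [hF]
      refine (Finset.sum_filter_of_ne fun i _ hne => ?_).symm
      constructor
      · intro h; exact hne (by simp [hd0 i (Or.inl h)])
      · intro h; exact hne (by simp [hd0 i (Or.inr h)])
    rw [hsum_eq]
    calc ∑ i ∈ F, |d i| ≤ ∑ _i ∈ F, (1:ℝ)/2 := Finset.sum_le_sum fun i _ => hdle i
      _ = F.card * (1/2) := by rw [Finset.sum_const, nsmul_eq_mul]
      _ ≤ (m:ℝ) * (1/2) := by nlinarith
      _ = (m:ℝ)/2 := by ring
  -- ℓ1 norm of w - v
  set S : ℝ := ∑ j, |w j - v j| with hSdef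
  have hS0 : 0 ≤ S := Finset.sum_nonneg fun j _ => abs_nonneg _
  have hSle : S ≤ (m:ℝ)^2 * B / 2 := by
    have hterm : ∀ j, |w j - v j| ≤ B * ((m:ℝ)/2) := by
      intro j
      have : w j - v j = ∑ i, Wr j i * d i := by
        have := congrFun hwv j
        simp only [Pi.sub_apply] at this
        rw [this]
        rfl
      rw [this]
      calc |∑ i, Wr j i * d i| ≤ ∑ i, |Wr j i * d i| := Finset.abs_sum_le_sum_abs _ _
        _ ≤ ∑ i, B * |d i| := by
            refine Finset.sum_le_sum fun i _ => ?_
            rw [abs_mul]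
            exact mul_le_mul_of_nonneg_right (hWB j i) (abs_nonneg _)
        _ = B * ∑ i, |d i| := by rw [Finset.mul_sum]
        _ ≤ B * ((m:ℝ)/2) := mul_le_mul_of_nonneg_left hdsum hB0
    calc S ≤ ∑ _j : Fin m, B * ((m:ℝ)/2) := Finset.sum_le_sum fun j _ => hterm j
      _ = (m:ℝ) * (B * ((m:ℝ)/2)) := by rw [Finset.sum_const]; simp [nsmul_eq_mul]
      _ = (m:ℝ)^2 * B / 2 := by ring
  -- first-order optimality: (fderiv g v) u = 0
  have hDvu : (fderiv ℝ g v) u = 0 := by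
    have hline : ∀ t : ℝ, Wr.mulVec (xs + t • d) = v + t • u := by
      intro t
      rw [Matrix.mulVec_add, Matrix.mulVec_smul, hvdef, hudef]
    have hloc : IsLocalMin (fun t : ℝ => g (v + t • u)) 0 := by
      have hev : ∀ᶠ t in nhds (0:ℝ), ∀ i, xs i + t * d i ∈ Set.Icc (0:ℝ) 1 := by
        rw [Filter.eventually_all]
        intro i
        by_cases h0 : xs i = 0 ∨ xs i = 1
        · have hdi : d i = 0 := hd0 i h0
          filter_upwards with t
          simpa [hdi] using hxs i
        · push_neg at h0
          have hio : xs i ∈ Set.Ioo (0:ℝ) 1 :=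
            ⟨lt_of_le_of_ne (hxs i).1 (Ne.symm h0.1), lt_of_le_of_ne (hxs i).2 h0.2⟩
          have hcont : ContinuousAt (fun t : ℝ => xs i + t * d i) 0 := by fun_prop
          have hmem : Set.Ioo (0:ℝ) 1 ∈ nhds ((fun t : ℝ => xs i + t * d i) 0) := by
            apply isOpen_Ioo.mem_nhds
            simpa using hio
          filter_upwards [hcont.eventually_mem hmem] with t ht
          exact Set.Ioo_subset_Icc_self ht
      filter_upwards [hev] with t ht
      have hy : ∀ i, (xs + t • d) i ∈ Set.Icc (0:ℝ) 1 := by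
        intro i; simpa using ht i
      have := hmin (xs + t • d) hy
      simpa [hline t] using this
    have hda : HasDerivAt (fun t : ℝ => v + t • u) u 0 := by
      simpa using ((hasDerivAt_id (0:ℝ)).smul_const u).const_add v
    have hfd : HasFDerivAt g (fderiv ℝ g v) ((fun t : ℝ => v + t • u) 0) := by
      simpa using (hdiff v).hasFDerivAt
    have hcomp : HasDerivAt (fun t : ℝ => g (v + t • u)) ((fderiv ℝ g v) u) 0 := by
      have := hfd.comp_hasDerivAt 0 hda
      exact this
    have := hloc.deriv_eq_zero
    rwa [hcomp.deriv] at this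
  -- convexity inequality: g w - g v ≤ (fderiv g w) (w - v)
  have hkey : g w - g v ≤ (fderiv ℝ g w) (w - v) := by
    set φ : ℝ → ℝ := fun t => g (v + t • (w - v)) with hφdef
    have hφconv : ConvexOn ℝ Set.univ φ := by
      have := hconv.comp_affineMap (AffineMap.lineMap v w)
      have heq : (g ∘ (AffineMap.lineMap v w : ℝ →ᵃ[ℝ] (Fin m → ℝ))) = φ := by
        funext t
        simp [hφdef, AffineMap.lineMap_apply, add_comm]
      have hpre : (AffineMap.lineMap v w : ℝ →ᵃ[ℝ] (Fin m → ℝ)) ⁻¹' Set.univ = Set.univ :=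
        Set.preimage_univ
      rw [hpre, heq] at this
      exact this
    have hda : HasDerivAt (fun t : ℝ => v + t • (w - v)) (w - v) 1 := by
      simpa using ((hasDerivAt_id (1:ℝ)).smul_const (w - v)).const_add v
    have hfd : HasFDerivAt g (fderiv ℝ g w) ((fun t : ℝ => v + t • (w - v)) 1) := by
      have h1 : (fun t : ℝ => v + t • (w - v)) 1 = w := by simp
      rw [h1]
      exact (hdiff w).hasFDerivAt
    have hφder : HasDerivAt φ ((fderiv ℝ g w) (w - v)) 1 := by
      have := hfd.comp_hasDerivAt 1 hda
      exact this
    have hslope := hφconv.slope_le_of_hasDerivAt (Set.mem_univ (0:ℝ)) (Set.mem_univ (1:ℝ))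
      zero_lt_one hφder
    have hφ0 : φ 0 = g v := by simp [hφdef]
    have hφ1 : φ 1 = g w := by simp [hφdef]
    have : slope φ 0 1 = g w - g v := by
      rw [slope_def_field, hφ0, hφ1]
      ring
    linarith [this ▸ hslope]
  -- combine
  have hsum : (fderiv ℝ g w) (w - v) ≤ L * S * S := by
    have h1 : (fderiv ℝ g w) (w - v) = (fderiv ℝ g w) (w - v) - (fderiv ℝ g v) (w - v) := by
      rw [hwv, hDvu]; ring
    rw [h1, hexp (fderiv ℝ g w) (w - v), hexp (fderiv ℝ g v) (w - v), ← Finset.sum_sub_distrib]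
    have : ∀ j : Fin m, (w - v) j * (fderiv ℝ g w) (Pi.single j 1) -
        (w - v) j * (fderiv ℝ g v) (Pi.single j 1) ≤ |w j - v j| * (L * S) := by
      intro j
      have hlip := hLip w v j
      calc (w - v) j * (fderiv ℝ g w) (Pi.single j 1) -
          (w - v) j * (fderiv ℝ g v) (Pi.single j 1)
          = (w - v) j * ((fderiv ℝ g w) (Pi.single j 1) - (fderiv ℝ g v) (Pi.single j 1)) := by
            ring
        _ ≤ |(w - v) j * ((fderiv ℝ g w) (Pi.single j 1) - (fderiv ℝ g v) (Pi.single j 1))| :=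
            le_abs_self _
        _ = |(w - v) j| * |(fderiv ℝ g w) (Pi.single j 1) - (fderiv ℝ g v) (Pi.single j 1)| :=
            abs_mul _ _
        _ ≤ |(w - v) j| * (L * S) := by
            apply mul_le_mul_of_nonneg_left _ (abs_nonneg _)
            simpa [hSdef] using hlip
        _ = |w j - v j| * (L * S) := by simp
    calc ∑ j, ((w - v) j * (fderiv ℝ g w) (Pi.single j 1) -
          (w - v) j * (fderiv ℝ g v) (Pi.single j 1))
        ≤ ∑ j, |w j - v j| * (L * S) := Finset.sum_le_sum fun j _ => this j
      _ = (∑ j, |w j - v j|) * (L * S) := by rw [← Finset.sum_mul]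
      _ = L * S * S := by rw [← hSdef]; ring
  have hfinal : L * S * S ≤ L / 4 * (m:ℝ)^4 * B^2 := by
    have hSsq : S * S ≤ ((m:ℝ)^2 * B / 2) * ((m:ℝ)^2 * B / 2) :=
      mul_le_mul hSle hSle hS0 (by positivity)
    nlinarith [hSsq]
  calc g w - g v ≤ (fderiv ℝ g w) (w - v) := hkey
    _ ≤ L * S * S := hsum
    _ ≤ L / 4 * (m:ℝ)^4 * B^2 := hfinal
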